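/- arXiv:math/0311520 — 5 statements merged into one kernel-verified Lean document; each statement's English description precedes it below -/
import Mathlib

section
/- Let k be a commutative ring, G a finite group whose order is invertible in k, and R a k-algebra. If E is a left module over the group algebra R[G] which is injective as a left R-module (via restriction of scalars), then E is injective as a left R[G]-module. -/
/-!
Statement 6: Let `k` be a commutative ring, `G` a finite group whose order is
invertible in `k`, and `R` a `k`-algebra. If `E` is a left module over the group
algebra `R[G] = MonoidAlgebra R G` which is injective as a left `R`-module (via
restriction of scalars along `R →+* R[G]`), then `E` is injective as a left
`R[G]`-module.
-/

theorem injective_monoidAlgebra_of_injective_restrictScalars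
    {k : Type*} [CommRing k] (G : Type*) [Group G] [Fintype G]
    (hG : IsUnit (Fintype.card G : k))
    (R : Type*) [Ring R] [Algebra k R]
    (E : Type*) [AddCommGroup E] [Module (MonoidAlgebra R G) E]
    (hE : letI : Module R E :=
            Module.compHom E (MonoidAlgebra.singleOneRingHom (R := R) (M := G));
          Module.Injective R E) :
    Module.Injective (MonoidAlgebra R G) E := by
  classical
  letI : Module R E := Module.compHom E (MonoidAlgebra.singleOneRingHom (R := R) (M := G))
  set A := MonoidAlgebra R G with hA
  constructor
  intro X Y _ _ _ _ i hi f
  letI : Module R X := Module.compHom X (MonoidAlgebra.singleOneRingHom (R := R) (M := G))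
  letI : Module R Y := Module.compHom Y (MonoidAlgebra.singleOneRingHom (R := R) (M := G))
  -- `r • x = single 1 r • x` definitionally in all three modules
  have hsX : ∀ (r : R) (x : X), r • x = (MonoidAlgebra.single 1 r : A) • x := fun _ _ => rfl
  have hsY : ∀ (r : R) (y : Y), r • y = (MonoidAlgebra.single 1 r : A) • y := fun _ _ => rfl
  have hsE : ∀ (r : R) (e : E), r • e = (MonoidAlgebra.single 1 r : A) • e := fun _ _ => rfl
  -- restrict i and f to R-linear maps
  let i' : X →ₗ[R] Y :=
    { toFun := i
      map_add' := i.map_add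
      map_smul' := fun r x => i.map_smul (MonoidAlgebra.single 1 r) x }
  let f' : X →ₗ[R] E :=
    { toFun := f
      map_add' := f.map_add
      map_smul' := fun r x => f.map_smul (MonoidAlgebra.single 1 r) x }
  obtain ⟨g, hg⟩ := hE.out i' hi f'
  have hg' : ∀ x : X, g (i x) = f x := hg
  -- the averaging sum
  let S : Y → E := fun y =>
    ∑ s : G, (MonoidAlgebra.single s⁻¹ (1 : R) : A) • g ((MonoidAlgebra.single s (1 : R) : A) • y)
  have Sadd : ∀ y₁ y₂, S (y₁ + y₂) = S y₁ + S y₂ := by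
    intro y₁ y₂
    simp only [S, smul_add, map_add, add_smul]
    rw [← Finset.sum_add_distrib]
  -- equivariance with respect to `single t r`
  have Ssingle : ∀ (t : G) (r : R) (y : Y),
      S ((MonoidAlgebra.single t r : A) • y) = (MonoidAlgebra.single t r : A) • S y := by
    intro t r y
    simp only [S, Finset.smul_sum]
    refine Fintype.sum_bijective (· * t) (Group.mulRight_bijective t) _ _ fun s => ?_
    have h1 : (MonoidAlgebra.single s (1 : R) : A) • (MonoidAlgebra.single t r : A) • y
        = (MonoidAlgebra.single (s * t) r : A) • y := by
      rw [← mul_smul, MonoidAlgebra.single_mul_single, one_mul]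
    have h2 : (MonoidAlgebra.single (s * t) r : A) • y
        = r • ((MonoidAlgebra.single (s * t) (1 : R) : A) • y) := by
      rw [hsY, ← mul_smul, MonoidAlgebra.single_mul_single, one_mul, mul_one]
    rw [h1, h2, map_smul, hsE, ← mul_smul, ← mul_smul,
      MonoidAlgebra.single_mul_single, MonoidAlgebra.single_mul_single]
    simp [mul_inv_rev, mul_assoc]
  -- full A-linearity of S
  have Ssmul : ∀ (c : A) (y : Y), S (c • y) = c • S y := by
    intro c y
    induction c using MonoidAlgebra.induction with
    | zero =>
        rw [zero_smul, zero_smul]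
        simp only [S, smul_zero, map_zero, Finset.sum_const_zero]
    | single_add t r c' _ _ ih =>
        rw [add_smul, Sadd, ih, Ssingle, add_smul]
  -- the scaling constant
  set c0 : A := algebraMap k A (Ring.inverse (Fintype.card G : k)) with hc0
  refine ⟨{ toFun := fun y => c0 • S y
            map_add' := fun y₁ y₂ => by rw [Sadd, smul_add]
            map_smul' := fun c y => by
              rw [RingHom.id_apply, Ssmul, ← mul_smul, ← mul_smul, hc0, Algebra.commutes] }, ?_⟩
  intro x
  have hS : S (i x) = (Fintype.card G : A) • f x := by
    have : ∀ s : G, (MonoidAlgebra.single s⁻¹ (1 : R) : A) •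
        g ((MonoidAlgebra.single s (1 : R) : A) • i x) = f x := by
      intro s
      rw [← i.map_smul, hg', ← f.map_smul,
        ← mul_smul, MonoidAlgebra.single_mul_single, inv_mul_cancel, one_mul]
      rw [show (MonoidAlgebra.single (1 : G) (1 : R) : A) = 1 from rfl, one_smul]
    simp only [S, this, Finset.sum_const, Finset.card_univ]
    rw [← Nat.cast_smul_eq_nsmul A]
  show c0 • S (i x) = f x
  rw [hS, ← mul_smul]
  have : c0 * (Fintype.card G : A) = 1 := by
    rw [hc0, ← map_natCast (algebraMap k A) (Fintype.card G), ← map_mul,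
      Ring.inverse_mul_cancel _ hG, map_one]
  rw [this, one_smul]
end

section
/- Let k be a commutative ring, G a finite group whose order is invertible in k, and R a k-algebra. If F is a left module over the group algebra R[G] which is flat as a left R-module (via restriction of scalars), then F is flat as a left R[G]-module. -/
/-!
Statement 7: Let `k` be a commutative ring, `G` a finite group whose order is
invertible in `k`, and `R` a `k`-algebra. If `F` is a left module over the group
algebra `R[G] = MonoidAlgebra R G` which is flat as a left `R`-module (via
restriction of scalars along `R →+* R[G]`), then `F` is flat as a left
`R[G]`-module.

Since Mathlib's tensor products and flatness are only developed over commutative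
rings, we first construct, for a (possibly noncommutative) ring `R`, the tensor
product `N ⊗[R] M` of a right `R`-module `N` and a left `R`-module `M` as the
quotient of `N ⊗[ℤ] M` by the bilinearity relations `(x·r) ⊗ m = x ⊗ (r·m)`, and we
say that a left `R`-module `M` is *flat* if tensoring with `M` preserves injectivity
of maps of right `R`-modules.
-/

universe u v

open TensorProduct MulOpposite

/-- The subgroup of relations defining `N ⊗[R] M` as a quotient of `N ⊗[ℤ] M`,
for a right `R`-module `N` and a left `R`-module `M`. -/
noncomputable def tensorRel (R : Type u) [Ring R] (N : Type v) [AddCommGroup N] [Module Rᵐᵒᵖ N]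
    (M : Type v) [AddCommGroup M] [Module R M] : AddSubgroup (N ⊗[ℤ] M) :=
  AddSubgroup.closure
    {z | ∃ (x : N) (r : R) (m : M), z = (op r • x) ⊗ₜ[ℤ] m - x ⊗ₜ[ℤ] (r • m)}

/-- The tensor product of a right `R`-module `N` and a left `R`-module `M`
over a (possibly noncommutative) ring `R`. -/
def RTensor (R : Type u) [Ring R] (N : Type v) [AddCommGroup N] [Module Rᵐᵒᵖ N]
    (M : Type v) [AddCommGroup M] [Module R M] : Type v :=
  (N ⊗[ℤ] M) ⧸ tensorRel R N M

noncomputable instance {R : Type u} [Ring R] {N : Type v} [AddCommGroup N] [Module Rᵐᵒᵖ N]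
    {M : Type v} [AddCommGroup M] [Module R M] : AddCommGroup (RTensor R N M) :=
  QuotientAddGroup.Quotient.addCommGroup _

/-- The map `N ⊗[R] M → N' ⊗[R] M` induced by a map `f : N → N'` of right
`R`-modules. -/
noncomputable def RTensor.map {R : Type u} [Ring R] {N N' : Type v}
    [AddCommGroup N] [Module Rᵐᵒᵖ N] [AddCommGroup N'] [Module Rᵐᵒᵖ N']
    (M : Type v) [AddCommGroup M] [Module R M] (f : N →ₗ[Rᵐᵒᵖ] N') :
    RTensor R N M →+ RTensor R N' M :=
  QuotientAddGroup.map _ _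
    (TensorProduct.map f.toAddMonoidHom.toIntLinearMap (LinearMap.id : M →ₗ[ℤ] M)).toAddMonoidHom
    (by
      unfold tensorRel
      rw [AddSubgroup.closure_le]
      rintro z ⟨x, r, m, rfl⟩
      refine AddSubgroup.mem_comap.2 ?_
      refine AddSubgroup.subset_closure ?_
      refine ⟨f x, r, m, ?_⟩
      simp [map_smul])

/-! Auxiliary definitions and lemmas for the proof. -/
noncomputable def RTensor.mk (R : Type u) [Ring R] (N : Type v) [AddCommGroup N] [Module Rᵐᵒᵖ N]
    (M : Type v) [AddCommGroup M] [Module R M] : (N ⊗[ℤ] M) →+ RTensor R N M :=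
  QuotientAddGroup.mk' (tensorRel R N M)

theorem RTensor.mk_rel {R : Type u} [Ring R] {N : Type v} [AddCommGroup N] [Module Rᵐᵒᵖ N]
    {M : Type v} [AddCommGroup M] [Module R M] (x : N) (r : R) (m : M) :
    RTensor.mk R N M ((op r • x) ⊗ₜ[ℤ] m) = RTensor.mk R N M (x ⊗ₜ[ℤ] (r • m)) := by
  show (QuotientAddGroup.mk ((op r • x) ⊗ₜ[ℤ] m) : (N ⊗[ℤ] M) ⧸ tensorRel R N M)
      = QuotientAddGroup.mk (x ⊗ₜ[ℤ] (r • m))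
  rw [QuotientAddGroup.eq]
  have h : -((op r • x) ⊗ₜ[ℤ] m) + x ⊗ₜ[ℤ] (r • m)
      = -((op r • x) ⊗ₜ[ℤ] m - x ⊗ₜ[ℤ] (r • m)) := by abel
  rw [h]
  exact neg_mem (AddSubgroup.subset_closure ⟨x, r, m, rfl⟩)

theorem RTensor.map_mk {R : Type u} [Ring R] {N N' : Type v}
    [AddCommGroup N] [Module Rᵐᵒᵖ N] [AddCommGroup N'] [Module Rᵐᵒᵖ N']
    (M : Type v) [AddCommGroup M] [Module R M] (f : N →ₗ[Rᵐᵒᵖ] N') (x : N) (m : M) :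
    RTensor.map M f (RTensor.mk R N M (x ⊗ₜ[ℤ] m)) = RTensor.mk R N' M ((f x) ⊗ₜ[ℤ] m) := by
  show RTensor.map M f (QuotientAddGroup.mk (x ⊗ₜ[ℤ] m)) = QuotientAddGroup.mk ((f x) ⊗ₜ[ℤ] m)
  rfl

theorem RTensor.induction_on {R : Type u} [Ring R] {N : Type v} [AddCommGroup N] [Module Rᵐᵒᵖ N]
    {M : Type v} [AddCommGroup M] [Module R M] {C : RTensor R N M → Prop} (z : RTensor R N M)
    (zero : C 0) (tmul : ∀ x m, C (RTensor.mk R N M (x ⊗ₜ[ℤ] m)))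
    (add : ∀ a b, C a → C b → C (a + b)) : C z := by
  obtain ⟨w, rfl⟩ := QuotientAddGroup.mk'_surjective (tensorRel R N M) z
  induction w using TensorProduct.induction_on with
  | zero => rw [map_zero]; exact zero
  | tmul x m => exact tmul x m
  | add a b ha hb => rw [map_add]; exact add _ _ ha hb

/-- A left module `M` over a (possibly noncommutative) ring `R` is flat if
tensoring with `M` preserves injectivity of maps of right `R`-modules. -/
def IsFlatModule (R : Type u) [Ring R] (M : Type u) [AddCommGroup M] [Module R M] : Prop :=
  ∀ (N N' : Type u) (_ : AddCommGroup N) (_ : AddCommGroup N')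
    (_ : Module Rᵐᵒᵖ N) (_ : Module Rᵐᵒᵖ N') (f : N →ₗ[Rᵐᵒᵖ] N'),
    Function.Injective f → Function.Injective (RTensor.map M f)

set_option maxHeartbeats 2000000 in
theorem flat_monoidAlgebra_of_flat_restrictScalars
    {k : Type u} [CommRing k] (G : Type u) [Group G] [Fintype G]
    (hG : IsUnit (Fintype.card G : k))
    (R : Type u) [Ring R] [Algebra k R]
    (F : Type u) [AddCommGroup F] [Module (MonoidAlgebra R G) F]
    (hF : letI : Module R F :=
            Module.compHom F (MonoidAlgebra.singleOneRingHom (R := R) (M := G));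
          IsFlatModule R F) :
    IsFlatModule (MonoidAlgebra R G) F := by
  classical
  letI instRF : Module R F :=
    Module.compHom F (MonoidAlgebra.singleOneRingHom (R := R) (M := G))
  replace hF : IsFlatModule R F := hF
  obtain ⟨c, hccomm, hccard⟩ :
      ∃ c : R, (∀ r : R, r * c = c * r) ∧ (Fintype.card G) • c = 1 := by
    refine ⟨algebraMap k R ((hG.unit⁻¹ : kˣ) : k), fun r => (Algebra.commutes _ r).symm, ?_⟩
    rw [← map_nsmul, nsmul_eq_mul, hG.mul_val_inv, map_one]
  intro N N' iN iN' mN mN' f hf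
  letI mRN : Module Rᵐᵒᵖ N :=
    Module.compHom N (RingHom.op (MonoidAlgebra.singleOneRingHom (R := R) (M := G)))
  letI mRN' : Module Rᵐᵒᵖ N' :=
    Module.compHom N' (RingHom.op (MonoidAlgebra.singleOneRingHom (R := R) (M := G)))
  have hsmN : ∀ (r : R) (y : N),
      (op r • y : N) = op ((MonoidAlgebra.single 1 r : MonoidAlgebra R G)) • y := fun _ _ => rfl
  have hsmN' : ∀ (r : R) (y : N'),
      (op r • y : N') = op ((MonoidAlgebra.single 1 r : MonoidAlgebra R G)) • y := fun _ _ => rfl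
  have hsmF : ∀ (r : R) (m : F),
      (r • m : F) = (MonoidAlgebra.single 1 r : MonoidAlgebra R G) • m := fun _ _ => rfl
  -- the averaging map for N
  let T : N →+ F →+ RTensor R N F :=
    { toFun := fun n =>
        { toFun := fun m => ∑ g : G, RTensor.mk R N F
            ((op (MonoidAlgebra.single g (1 : R)) • n) ⊗ₜ[ℤ]
              ((MonoidAlgebra.single g⁻¹ c : MonoidAlgebra R G) • m))
          map_zero' := by simp
          map_add' := fun m₁ m₂ => by
            simp [smul_add, tmul_add, Finset.sum_add_distrib] }
      map_zero' := by ext m; simp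
      map_add' := fun n₁ n₂ => by
        ext m; simp [smul_add, add_tmul, Finset.sum_add_distrib] }
  have hTbal : ∀ (z : ℤ) (n : N) (m : F), T (z • n) m = T n (z • m) := by
    intro z n m
    rw [map_zsmul T, map_zsmul (T n)]
    rfl
  let s0 : N ⊗[ℤ] F →+ RTensor R N F := TensorProduct.liftAddHom T hTbal
  have hs0 : ∀ (n : N) (m : F), s0 (n ⊗ₜ[ℤ] m) = ∑ g : G, RTensor.mk R N F
      ((op (MonoidAlgebra.single g (1 : R)) • n) ⊗ₜ[ℤ]
        ((MonoidAlgebra.single g⁻¹ c : MonoidAlgebra R G) • m)) := fun n m => rfl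
  have hsingle : ∀ (g : G) (r : R) (x : N) (m : F),
      s0 ((op (MonoidAlgebra.single g r) • x) ⊗ₜ[ℤ] m)
        = s0 (x ⊗ₜ[ℤ] ((MonoidAlgebra.single g r : MonoidAlgebra R G) • m)) := by
    intro g r x m
    rw [hs0, hs0]
    refine Fintype.sum_equiv (Equiv.mulLeft g) _ _ ?_
    intro g'
    have e1 : op (MonoidAlgebra.single g' (1 : R)) • (op (MonoidAlgebra.single g r) • x)
        = op ((MonoidAlgebra.single 1 r : MonoidAlgebra R G))
            • (op (MonoidAlgebra.single (g * g') (1 : R)) • x) := by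
      rw [smul_smul, smul_smul, ← op_mul, ← op_mul, MonoidAlgebra.single_mul_single,
        MonoidAlgebra.single_mul_single]
      simp
    rw [e1, ← hsmN r, RTensor.mk_rel, hsmF r, smul_smul, MonoidAlgebra.single_mul_single]
    show _ = RTensor.mk R N F ((op (MonoidAlgebra.single (g * g') (1:R)) • x) ⊗ₜ[ℤ]
      ((MonoidAlgebra.single (g * g')⁻¹ c : MonoidAlgebra R G) •
        ((MonoidAlgebra.single g r : MonoidAlgebra R G) • m)))
    rw [smul_smul, MonoidAlgebra.single_mul_single]
    have : (g * g')⁻¹ * g = g'⁻¹ := by group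
    rw [this, hccomm r]
    simp only [one_mul]
  have key : ∀ (a : MonoidAlgebra R G) (x : N) (m : F),
      s0 ((op a • x) ⊗ₜ[ℤ] m) = s0 (x ⊗ₜ[ℤ] (a • m)) := by
    intro a x m
    induction a using MonoidAlgebra.induction with
    | zero => simp
    | single_add g r b _ _ ih =>
      rw [op_add, add_smul, add_smul, add_tmul, tmul_add, map_add, map_add, hsingle g r, ih]
  have hvan : tensorRel (MonoidAlgebra R G) N F ≤ s0.ker := by
    unfold tensorRel
    rw [AddSubgroup.closure_le]
    rintro z ⟨x, a, m, rfl⟩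
    simp only [SetLike.mem_coe, AddMonoidHom.mem_ker, map_sub, sub_eq_zero]
    exact key a x m
  let sN : RTensor (MonoidAlgebra R G) N F →+ RTensor R N F :=
    QuotientAddGroup.lift _ s0 (fun z hz => hvan hz)
  have hsN : ∀ w : N ⊗[ℤ] F, sN (RTensor.mk _ N F w) = s0 w := fun w => rfl
  -- the averaging map for N'
  let T2 : N' →+ F →+ RTensor R N' F :=
    { toFun := fun n =>
        { toFun := fun m => ∑ g : G, RTensor.mk R N' F
            ((op (MonoidAlgebra.single g (1 : R)) • n) ⊗ₜ[ℤ]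
              ((MonoidAlgebra.single g⁻¹ c : MonoidAlgebra R G) • m))
          map_zero' := by simp
          map_add' := fun m₁ m₂ => by
            simp [smul_add, tmul_add, Finset.sum_add_distrib] }
      map_zero' := by ext m; simp
      map_add' := fun n₁ n₂ => by
        ext m; simp [smul_add, add_tmul, Finset.sum_add_distrib] }
  have hTbal2 : ∀ (z : ℤ) (n : N') (m : F), T2 (z • n) m = T2 n (z • m) := by
    intro z n m
    rw [map_zsmul T2, map_zsmul (T2 n)]
    rfl
  let s02 : N' ⊗[ℤ] F →+ RTensor R N' F := TensorProduct.liftAddHom T2 hTbal2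
  have hs02 : ∀ (n : N') (m : F), s02 (n ⊗ₜ[ℤ] m) = ∑ g : G, RTensor.mk R N' F
      ((op (MonoidAlgebra.single g (1 : R)) • n) ⊗ₜ[ℤ]
        ((MonoidAlgebra.single g⁻¹ c : MonoidAlgebra R G) • m)) := fun n m => rfl
  have hsingle2 : ∀ (g : G) (r : R) (x : N') (m : F),
      s02 ((op (MonoidAlgebra.single g r) • x) ⊗ₜ[ℤ] m)
        = s02 (x ⊗ₜ[ℤ] ((MonoidAlgebra.single g r : MonoidAlgebra R G) • m)) := by
    intro g r x m
    rw [hs02, hs02]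
    refine Fintype.sum_equiv (Equiv.mulLeft g) _ _ ?_
    intro g'
    have e1 : op (MonoidAlgebra.single g' (1 : R)) • (op (MonoidAlgebra.single g r) • x)
        = op ((MonoidAlgebra.single 1 r : MonoidAlgebra R G))
            • (op (MonoidAlgebra.single (g * g') (1 : R)) • x) := by
      rw [smul_smul, smul_smul, ← op_mul, ← op_mul, MonoidAlgebra.single_mul_single,
        MonoidAlgebra.single_mul_single]
      simp
    rw [e1, ← hsmN' r, RTensor.mk_rel, hsmF r, smul_smul, MonoidAlgebra.single_mul_single]
    show _ = RTensor.mk R N' F ((op (MonoidAlgebra.single (g * g') (1:R)) • x) ⊗ₜ[ℤ]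
      ((MonoidAlgebra.single (g * g')⁻¹ c : MonoidAlgebra R G) •
        ((MonoidAlgebra.single g r : MonoidAlgebra R G) • m)))
    rw [smul_smul, MonoidAlgebra.single_mul_single]
    have : (g * g')⁻¹ * g = g'⁻¹ := by group
    rw [this, hccomm r]
    simp only [one_mul]
  have key2 : ∀ (a : MonoidAlgebra R G) (x : N') (m : F),
      s02 ((op a • x) ⊗ₜ[ℤ] m) = s02 (x ⊗ₜ[ℤ] (a • m)) := by
    intro a x m
    induction a using MonoidAlgebra.induction with
    | zero => simp
    | single_add g r b _ _ ih =>
      rw [op_add, add_smul, add_smul, add_tmul, tmul_add, map_add, map_add, hsingle2 g r, ih]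
  have hvan2 : tensorRel (MonoidAlgebra R G) N' F ≤ s02.ker := by
    unfold tensorRel
    rw [AddSubgroup.closure_le]
    rintro z ⟨x, a, m, rfl⟩
    simp only [SetLike.mem_coe, AddMonoidHom.mem_ker, map_sub, sub_eq_zero]
    exact key2 a x m
  let sN2 : RTensor (MonoidAlgebra R G) N' F →+ RTensor R N' F :=
    QuotientAddGroup.lift _ s02 (fun z hz => hvan2 hz)
  have hsN2 : ∀ w : N' ⊗[ℤ] F, sN2 (RTensor.mk _ N' F w) = s02 w := fun w => rfl
  let piN : RTensor R N F →+ RTensor (MonoidAlgebra R G) N F :=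
    QuotientAddGroup.map _ _ (AddMonoidHom.id _) (by
      unfold tensorRel
      rw [AddSubgroup.closure_le]
      rintro z ⟨x, r, m, rfl⟩
      exact AddSubgroup.mem_comap.2 (AddSubgroup.subset_closure
        ⟨x, MonoidAlgebra.single 1 r, m, rfl⟩))
  have hpiN : ∀ w : N ⊗[ℤ] F, piN (RTensor.mk R N F w) = RTensor.mk _ N F w := fun w => rfl
  have hps : ∀ z : RTensor (MonoidAlgebra R G) N F, piN (sN z) = z := by
    intro z
    refine RTensor.induction_on (C := fun w => piN (sN w) = w) z ?_ ?_ ?_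
    · show piN (sN 0) = 0
      rw [map_zero, map_zero]
    · intro x m
      rw [hsN, hs0, map_sum]
      have h1 : ∀ g : G, piN (RTensor.mk R N F
          ((op (MonoidAlgebra.single g (1:R)) • x) ⊗ₜ[ℤ]
            ((MonoidAlgebra.single g⁻¹ c : MonoidAlgebra R G) • m)))
          = RTensor.mk (MonoidAlgebra R G) N F
              (x ⊗ₜ[ℤ] ((MonoidAlgebra.single (1:G) c : MonoidAlgebra R G) • m)) := by
        intro g
        rw [hpiN, RTensor.mk_rel, smul_smul, MonoidAlgebra.single_mul_single, one_mul,
          mul_inv_cancel]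
      rw [Finset.sum_congr rfl (fun g _ => h1 g), Finset.sum_const, Finset.card_univ]
      rw [← natCast_zsmul, ← map_zsmul, ← TensorProduct.tmul_smul, natCast_zsmul,
        ← smul_assoc, MonoidAlgebra.smul_single, hccard]
      have h2 : (MonoidAlgebra.single (1:G) (1:R) : MonoidAlgebra R G) = 1 :=
        MonoidAlgebra.one_def.symm
      show RTensor.mk (MonoidAlgebra R G) N F
          (x ⊗ₜ[ℤ] ((MonoidAlgebra.single (1:G) (1:R) : MonoidAlgebra R G) • m))
        = RTensor.mk (MonoidAlgebra R G) N F (x ⊗ₜ[ℤ] m)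
      rw [h2, one_smul]
    · intro a b ha hb
      simp only [map_add, ha, hb]
  let fR : N →ₗ[Rᵐᵒᵖ] N' :=
    { toFun := f
      map_add' := fun a b => map_add f a b
      map_smul' := fun r y =>
        f.map_smul (op ((MonoidAlgebra.single 1 r.unop : MonoidAlgebra R G))) y }
  have hnat : ∀ z : RTensor (MonoidAlgebra R G) N F,
      sN2 (RTensor.map F f z) = RTensor.map F fR (sN z) := by
    intro z
    refine RTensor.induction_on
      (C := fun w => sN2 (RTensor.map F f w) = RTensor.map F fR (sN w)) z ?_ ?_ ?_
    · show sN2 (RTensor.map F f 0) = RTensor.map F fR (sN 0)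
      rw [map_zero, map_zero, map_zero, map_zero]
    · intro x m
      rw [RTensor.map_mk, hsN2, hs02, hsN, hs0, map_sum]
      refine Finset.sum_congr rfl fun g _ => ?_
      rw [RTensor.map_mk]
      exact congrArg (fun y => RTensor.mk R N' F
        (y ⊗ₜ[ℤ] ((MonoidAlgebra.single g⁻¹ c : MonoidAlgebra R G) • m)))
        (f.map_smul (op (MonoidAlgebra.single g (1:R))) x).symm
    · intro a b ha hb
      simp only [map_add, ha, hb]
  have hfR : Function.Injective fR := hf
  have hinj := hF N N' iN iN' mRN mRN' fR hfR
  rw [injective_iff_map_eq_zero]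
  intro z hz
  have h1 : RTensor.map F fR (sN z) = 0 := by rw [← hnat, hz, map_zero]
  have h2 : sN z = 0 := (injective_iff_map_eq_zero _).1 hinj _ h1
  rw [← hps z, h2, map_zero]
end

section
/- Let k be a field, G a finite group whose order is not divisible by the characteristic of k, and R a k-algebra. Then R is von Neumann regular if and only if the group algebra R[G] is von Neumann regular. -/
/-!
Statement 14: Let `k` be a field, `G` a finite group whose order is not divisible by
the characteristic of `k`, and `R` a `k`-algebra. Then `R` is von Neumann regular if
and only if the group algebra `R[G] = MonoidAlgebra R G` is von Neumann regular.
-/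

/-- A ring `A` is von Neumann regular if every `a : A` admits `x : A`
with `a * x * a = a`. -/
def IsVonNeumannRegularRing (A : Type*) [Ring A] : Prop :=
  ∀ a : A, ∃ x : A, a * x * a = a

private lemma idem_glue {R : Type*} [Ring R] {e f : R}
    (hee : e * e = e) (hff : f * f = f) (hfe : f * e = 0) :
    (e + f - e * f) * (e + f - e * f) = e + f - e * f := by
  have expand : (e + f - e * f) * (e + f - e * f)
      = e*e + e*f - e*(e*f) + (f*e + f*f - f*(e*f)) - ((e*f)*e + (e*f)*f - (e*f)*(e*f)) := by
    noncomm_ring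
  rw [expand, hee, hff, hfe, ← mul_assoc e e f, hee,
    ← mul_assoc f e f, hfe, zero_mul,
    mul_assoc e f e, hfe, mul_zero,
    mul_assoc e f f, hff,
    mul_assoc e f (e * f), ← mul_assoc f e f, hfe, zero_mul, mul_zero]
  noncomm_ring

theorem vnr_partial_unit {R : Type*} [Ring R] (hR : IsVonNeumannRegularRing R)
    {ι : Type*} [DecidableEq ι] (w : ι → R) (s : Finset ι) :
    ∃ f : R, f * f = f ∧ (∀ i ∈ s, f * w i = w i) ∧
      ∃ c : ι → R, f = ∑ i ∈ s, w i * c i := by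
  classical
  induction s using Finset.induction_on with
  | empty => exact ⟨0, by simp, by simp, 0, by simp⟩
  | @insert i s hi ih =>
    obtain ⟨f, hff, hfw, c, hc⟩ := ih
    set u := w i - f * w i with hu
    obtain ⟨x, hx⟩ := hR u
    have hee : (u * x) * (u * x) = u * x := by rw [← mul_assoc, hx]
    have hfu : f * u = 0 := by rw [hu, mul_sub, ← mul_assoc, hff, sub_self]
    have hfe : f * (u * x) = 0 := by rw [← mul_assoc, hfu, zero_mul]
    refine ⟨(u * x) + f - (u * x) * f, idem_glue hee hff hfe, ?_, ?_⟩
    · intro j hj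
      have expand : ((u * x) + f - (u * x) * f) * w j
          = (u * x) * (w j - f * w j) + f * w j := by noncomm_ring
      rcases Finset.mem_insert.mp hj with rfl | hjs
      · rw [expand, ← hu, hx, hu]
        noncomm_ring
      · rw [expand, hfw j hjs, sub_self, mul_zero, zero_add]
    · refine ⟨Function.update (fun j => c j - c j * (w i * (x * (1 - f)))) i (x * (1 - f)), ?_⟩
      rw [Finset.sum_insert hi, Function.update_self]
      have hsum : ∑ j ∈ s, w j * Function.update
            (fun j => c j - c j * (w i * (x * (1 - f)))) i (x * (1 - f)) j
          = (∑ j ∈ s, w j * c j) - (∑ j ∈ s, w j * c j) * (w i * (x * (1 - f))) := by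
        have step : ∀ j ∈ s, w j * Function.update
              (fun j => c j - c j * (w i * (x * (1 - f)))) i (x * (1 - f)) j
            = w j * c j - (w j * c j) * (w i * (x * (1 - f))) := by
          intro j hj
          rw [Function.update_of_ne (by rintro rfl; exact hi hj), mul_sub, mul_assoc]
        rw [Finset.sum_congr rfl step, Finset.sum_sub_distrib, ← Finset.sum_mul]
      rw [hsum, ← hc]
      have he' : u * x = w i * x - f * (w i * x) := by
        rw [hu, sub_mul, mul_assoc]
      rw [he']
      noncomm_ring

section
variable {R : Type*} [Ring R] {G : Type*} [Group G] [Fintype G]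

open MonoidAlgebra

/-- Cyclic quasi-projection: an `R`-linear map sending `w ↦ w`, with range in `R ∙ w`. -/
theorem exists_cyclic_proj (hR : IsVonNeumannRegularRing R)
    (w : MonoidAlgebra R G) :
    ∃ q : MonoidAlgebra R G →ₗ[R] MonoidAlgebra R G,
      q w = w ∧ ∀ x, ∃ r : R, q x = r • w := by
  classical
  obtain ⟨f, hff, hfw, c, hc⟩ := vnr_partial_unit hR (fun g => w.coeff g) Finset.univ
  refine ⟨{ toFun := fun x => (∑ g : G, x.coeff g * c g) • w
            map_add' := ?_
            map_smul' := ?_ }, ?_, fun x => ⟨_, rfl⟩⟩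
  · intro x y
    have h1 : ∀ g : G, (x + y).coeff g = x.coeff g + y.coeff g := fun g => rfl
    simp only [h1, add_mul, Finset.sum_add_distrib, add_smul]
  · intro r x
    have h1 : ∀ g : G, (r • x).coeff g = r * x.coeff g := fun g => rfl
    simp only [h1, mul_assoc, ← Finset.mul_sum, RingHom.id_apply, mul_smul]
  · simp only [LinearMap.coe_mk, AddHom.coe_mk]
    rw [← hc]
    ext g
    have h1 : (f • w).coeff g = f * w.coeff g := rfl
    rw [h1, hfw g (Finset.mem_univ g)]
end

section
variable {R : Type*} [Ring R] {G : Type*} [Group G] [Fintype G]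
open MonoidAlgebra

theorem exists_proj_span (hR : IsVonNeumannRegularRing R)
    {ι : Type*} [DecidableEq ι] (v : ι → MonoidAlgebra R G) (s : Finset ι) :
    ∃ π : MonoidAlgebra R G →ₗ[R] MonoidAlgebra R G,
      (∀ i ∈ s, π (v i) = v i) ∧ ∀ x, π x ∈ Submodule.span R (v '' ↑s) := by
  classical
  induction s using Finset.induction_on with
  | empty => exact ⟨0, by simp, fun x => by simp⟩
  | @insert i s hi ih =>
    obtain ⟨π, hπfix, hπmem⟩ := ih
    obtain ⟨q, hqw, hqr⟩ := exists_cyclic_proj hR (v i - π (v i))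
    set w := v i - π (v i) with hw
    have hsub : Submodule.span R (v '' ↑s) ≤ Submodule.span R (v '' ↑(insert i s)) :=
      Submodule.span_mono (Set.image_mono (by simp [Finset.coe_insert, Set.subset_insert]))
    have hwmem : w ∈ Submodule.span R (v '' ↑(insert i s)) := by
      refine sub_mem (Submodule.subset_span ?_) (hsub (hπmem (v i)))
      exact Set.mem_image_of_mem _ (by simp)
    refine ⟨π + q ∘ₗ (LinearMap.id - π : MonoidAlgebra R G →ₗ[R] MonoidAlgebra R G), ?_, ?_⟩
    · intro j hj
      rcases Finset.mem_insert.mp hj with rfl | hjs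
      · simp only [LinearMap.add_apply, LinearMap.comp_apply, LinearMap.sub_apply,
          LinearMap.id_apply]
        rw [← hw, hqw, hw]
        abel
      · simp only [LinearMap.add_apply, LinearMap.comp_apply, LinearMap.sub_apply,
          LinearMap.id_apply, hπfix j hjs, sub_self, map_zero, add_zero]
    · intro x
      simp only [LinearMap.add_apply, LinearMap.comp_apply]
      refine add_mem (hsub (hπmem x)) ?_
      obtain ⟨r, hr⟩ := hqr ((LinearMap.id - π : MonoidAlgebra R G →ₗ[R] MonoidAlgebra R G) x)
      rw [hr]
      exact Submodule.smul_mem _ _ hwmem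
end

open MonoidAlgebra in
theorem vnr_monoidAlgebra {k : Type*} [Field k] (G : Type*) [Group G] [Fintype G]
    (hG : ¬ (ringChar k ∣ Fintype.card G))
    (R : Type*) [Ring R] [Algebra k R] (hR : IsVonNeumannRegularRing R) :
    IsVonNeumannRegularRing (MonoidAlgebra R G) := by
  classical
  intro a
  have hsmul : ∀ (r : R) (y : MonoidAlgebra R G), single (1:G) r * y = r • y := by
    intro r y
    ext g
    rw [single_one_mul_apply]
    rfl
  have hg_smul : ∀ (g : G) (r : R) (y : MonoidAlgebra R G),
      single g (1:R) * (r • y) = r • (single g 1 * y) := by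
    intro g r y
    rw [← hsmul, ← hsmul, ← mul_assoc, ← mul_assoc, single_mul_single, single_mul_single,
      mul_one, one_mul, one_mul, mul_one]
  set v : G → MonoidAlgebra R G := fun g => single g 1 * a with hv
  set N := Submodule.span R (v '' ↑(Finset.univ : Finset G)) with hN
  obtain ⟨π, hπfix, hπmem⟩ := exists_proj_span hR v Finset.univ
  have hπN : ∀ y ∈ N, π y = y := by
    intro y hy
    refine Submodule.span_induction ?_ (map_zero π)
      (fun x y _ _ hx hy => by rw [map_add, hx, hy])
      (fun r x _ hx => by rw [map_smul, hx]) hy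
    rintro x ⟨g, -, rfl⟩
    exact hπfix g (Finset.mem_univ g)
  have hNmul : ∀ (g : G), ∀ y ∈ N, single g (1:R) * y ∈ N := by
    intro g y hy
    refine Submodule.span_induction ?_ (by rw [mul_zero]; exact zero_mem N)
      (fun x y _ _ hx hy => by rw [mul_add]; exact add_mem hx hy)
      (fun r x _ hx => by rw [hg_smul]; exact Submodule.smul_mem _ _ hx) hy
    rintro x ⟨h', -, rfl⟩
    have : single g (1:R) * v h' = v (g * h') := by
      rw [hv, ← mul_assoc, single_mul_single, one_mul]
    rw [this]
    exact Submodule.subset_span (Set.mem_image_of_mem _ (by simp))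
  haveI := ringChar.charP k
  have hcard : ((Fintype.card G : k)) ≠ 0 := fun h =>
    hG ((CharP.cast_eq_zero_iff k (ringChar k) _).mp h)
  set p : MonoidAlgebra R G → MonoidAlgebra R G :=
    fun x => ((Fintype.card G : k))⁻¹ • ∑ g : G, single g⁻¹ (1:R) * π (single g 1 * x) with hp
  have hksmul : ∀ (cc : k) (y : MonoidAlgebra R G), y ∈ N → cc • y ∈ N := by
    intro cc y hy
    rw [← algebraMap_smul R cc y]
    exact Submodule.smul_mem _ _ hy
  have hpmem : ∀ x, p x ∈ N := by
    intro x
    simp only [hp]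
    exact hksmul _ _ (Submodule.sum_mem _ fun g _ => hNmul g⁻¹ _ (hπmem _))
  have hpN : ∀ y ∈ N, p y = y := by
    intro y hy
    simp only [hp]
    have term : ∀ g : G, single g⁻¹ (1:R) * π (single g 1 * y) = y := by
      intro g
      rw [hπN _ (hNmul g y hy), ← mul_assoc, single_mul_single, inv_mul_cancel, mul_one,
        ← one_def, one_mul]
    rw [Finset.sum_congr rfl fun g _ => term g, Finset.sum_const, Finset.card_univ,
      ← Nat.cast_smul_eq_nsmul k, smul_smul, inv_mul_cancel₀ hcard, one_smul]
  have hpsingle : ∀ (h : G) (r : R) (x : MonoidAlgebra R G),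
      p (single h r * x) = single h r * p x := by
    intro h r x
    have term1 : ∀ g : G, single g (1:R) * (single h r * x)
        = r • (single (g * h) (1:R) * x) := by
      intro g
      rw [← mul_assoc, single_mul_single, one_mul,
        show single (g * h) r = single (1:G) r * single (g * h) (1:R) by
          rw [single_mul_single, one_mul, mul_one],
        mul_assoc, hsmul]
    simp only [hp]
    have stepA : ∑ g : G, single g⁻¹ (1:R) * π (single g 1 * (single h r * x))
        = ∑ g : G, r • (single g⁻¹ (1:R) * π (single (g * h) (1:R) * x)) :=
      Finset.sum_congr rfl fun g _ => by rw [term1 g, map_smul, hg_smul]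
    have stepB : ∑ g : G, r • (single g⁻¹ (1:R) * π (single (g * h) (1:R) * x))
        = ∑ g : G, r • (single (h * g⁻¹) (1:R) * π (single g (1:R) * x)) := by
      refine Fintype.sum_equiv (Equiv.mulRight h) _ _ fun g => ?_
      have : h * (g * h)⁻¹ = g⁻¹ := by group
      simp only [Equiv.coe_mulRight, this]
    have stepC : ∀ g : G, r • (single (h * g⁻¹) (1:R) * π (single g (1:R) * x))
        = single h r * (single g⁻¹ (1:R) * π (single g (1:R) * x)) := by
      intro g
      rw [← mul_assoc, single_mul_single, mul_one, ← hg_smul,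
        ← hsmul, ← mul_assoc, single_mul_single, one_mul, mul_one]
    rw [stepA, stepB, Finset.sum_congr rfl fun g _ => stepC g, ← Finset.mul_sum,
      mul_smul_comm]
  have hpadd : ∀ x y, p (x + y) = p x + p y := by
    intro x y
    simp only [hp]
    rw [← smul_add, ← Finset.sum_add_distrib]
    congr 1
    refine Finset.sum_congr rfl fun g _ => ?_
    rw [mul_add, map_add, mul_add]
  have hpzero : p 0 = 0 := by
    simp [hp]
  have hpmul : ∀ (b x : MonoidAlgebra R G), p (b * x) = b * p x := by
    intro b x
    induction b using MonoidAlgebra.induction with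
    | zero => rw [zero_mul, hpzero, zero_mul]
    | single_add g r f _ _ ih =>
      rw [add_mul, hpadd, ih,
        hpsingle, ← add_mul]
  have haN : a ∈ N := by
    have : a = v 1 := by rw [hv]; simp only; rw [← one_def, one_mul]
    rw [this]
    exact Submodule.subset_span (Set.mem_image_of_mem _ (by simp))
  have hform : ∀ y ∈ N, ∃ b, y = b * a := by
    intro y hy
    refine Submodule.span_induction ?_ ⟨0, (zero_mul a).symm⟩
      (fun x y _ _ ⟨b, hb⟩ ⟨b', hb'⟩ => ⟨b + b', by rw [hb, hb', add_mul]⟩)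
      (fun r x _ ⟨b, hb⟩ => ⟨single 1 r * b, by rw [hb, ← hsmul, ← mul_assoc]⟩) hy
    rintro x ⟨g, -, rfl⟩
    exact ⟨single g 1, rfl⟩
  obtain ⟨b, hb⟩ := hform _ (hpmem 1)
  refine ⟨b, ?_⟩
  have h1 : a = a * p 1 := by
    conv_lhs => rw [← hpN a haN, ← mul_one a, hpmul a 1]
  rw [hb] at h1
  rw [mul_assoc]
  exact h1.symm

open MonoidAlgebra in
theorem vnr_of_vnr_monoidAlgebra {R : Type*} [Ring R] (G : Type*) [Group G]
    (hA : IsVonNeumannRegularRing (MonoidAlgebra R G)) : IsVonNeumannRegularRing R := by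
  intro a
  let ε : MonoidAlgebra R G →+* R :=
    liftNCRingHom (RingHom.id R) (1 : G →* R) (fun {x y} => by simp [Commute.one_right])
  have hε : ∀ (g : G) (r : R), ε (single g r) = r := by
    intro g r
    simp [ε, liftNCRingHom, liftNC_single]
  obtain ⟨y, hy⟩ := hA (single (1:G) a)
  refine ⟨ε y, ?_⟩
  have := congrArg ε hy
  rwa [map_mul, map_mul, hε] at this


theorem isVonNeumannRegularRing_iff_monoidAlgebra
    {k : Type*} [Field k] (G : Type*) [Group G] [Fintype G]
    (hG : ¬ (ringChar k ∣ Fintype.card G))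
    (R : Type*) [Ring R] [Algebra k R] :
    IsVonNeumannRegularRing R ↔ IsVonNeumannRegularRing (MonoidAlgebra R G) :=
  ⟨vnr_monoidAlgebra G hG R, vnr_of_vnr_monoidAlgebra G⟩
end

section
/- Let k be a field, G a finite group whose order is not divisible by the characteristic of k, and R a k-algebra. If every finitely generated left ideal of R is projective as a left R-module (R is left semi-hereditary), then every finitely generated left ideal of the group algebra R[G] is projective as a left R[G]-module (R[G] is left semi-hereditary). -/
set_option maxHeartbeats 1000000
set_option synthInstance.maxHeartbeats 200000


/-!
Statement 15: Let `k` be a field, `G` a finite group whose order is not divisible by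
the characteristic of `k`, and `R` a `k`-algebra. If `R` is left semi-hereditary
(every finitely generated left ideal is projective as a left `R`-module), then the
group algebra `R[G] = MonoidAlgebra R G` is left semi-hereditary.
(`Ideal A = Submodule A A` is the type of left ideals of `A`.)
-/

open MonoidAlgebra Function

section ProdProj

variable {R : Type*} [Ring R]

theorem myProjective_prod {M N : Type*} [AddCommMonoid M] [AddCommMonoid N]
    [Module R M] [Module R N] [Module.Projective R M] [Module.Projective R N] :
    Module.Projective R (M × N) := by
  obtain ⟨sM, hsM⟩ := Module.projective_def'.mp ‹Module.Projective R M›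
  obtain ⟨sN, hsN⟩ := Module.projective_def'.mp ‹Module.Projective R N›
  refine Module.projective_def'.mpr ⟨(Finsupp.lmapDomain R R (LinearMap.inl R M N)).comp
      (sM.comp (LinearMap.fst R M N)) +
      (Finsupp.lmapDomain R R (LinearMap.inr R M N)).comp (sN.comp (LinearMap.snd R M N)), ?_⟩
  refine LinearMap.ext fun x => ?_
  have hm : Finsupp.linearCombination R (id : M → M) (sM x.1) = x.1 :=
    LinearMap.congr_fun hsM x.1
  have hn : Finsupp.linearCombination R (id : N → N) (sN x.2) = x.2 :=
    LinearMap.congr_fun hsN x.2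
  simp only [LinearMap.comp_apply, LinearMap.add_apply, map_add, Finsupp.lmapDomain_apply,
    LinearMap.fst_apply, LinearMap.snd_apply, LinearMap.id_apply,
    Finsupp.linearCombination_mapDomain, Function.id_comp,
    ← Finsupp.apply_linearCombination_id, hm, hn]
  simp

/-- Over a left semi-hereditary ring, every f.g. submodule of a finite free module
is projective. -/
theorem myFree_submodule_projective
    (hR : ∀ I : Ideal R, I.FG → Module.Projective R I) :
    ∀ (n : ℕ) (N : Submodule R (Fin n → R)), N.FG → Module.Projective R N := by
  intro n
  induction n with
  | zero =>
    intro N _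
    haveI : Subsingleton (Fin 0 → R) := by infer_instance
    haveI : Subsingleton N := ⟨fun a b => Subtype.ext (Subsingleton.elim _ _)⟩
    infer_instance
  | succ n ih =>
    intro N hN
    haveI : Module.Finite R N := Module.Finite.iff_fg.mpr hN
    set f : N →ₗ[R] R := (LinearMap.proj (Fin.last n)).comp N.subtype with hf
    haveI : Module.Finite R (LinearMap.range f) := Module.Finite.range f
    have hJproj : Module.Projective R (LinearMap.range f) :=
      hR _ (Module.Finite.iff_fg.mp inferInstance)
    set p : N →ₗ[R] LinearMap.range f := f.rangeRestrict with hpdef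
    have hp : Surjective p := f.surjective_rangeRestrict
    obtain ⟨s, hs⟩ := Module.projective_lifting_property p LinearMap.id hp
    set K : Submodule R N := LinearMap.ker p with hK
    have hmem : ∀ x : N, x - s (p x) ∈ K := by
      intro x
      have h1 : p (s (p x)) = p x := LinearMap.congr_fun hs (p x)
      simp [hK, LinearMap.mem_ker, map_sub, h1]
    set r : N →ₗ[R] K := LinearMap.codRestrict K (LinearMap.id - s.comp p) hmem with hr
    have hrsurj : Surjective r := by
      intro y
      refine ⟨(y : N), Subtype.ext ?_⟩
      have hy : p (y : N) = 0 := y.2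
      simp [hr, hy]
    haveI : Module.Finite R K := Module.Finite.of_surjective r hrsurj
    set g : K →ₗ[R] (Fin n → R) :=
      ((LinearMap.funLeft R R Fin.castSucc).comp N.subtype).comp K.subtype with hg
    have hlast : ∀ z : K, ((z : N) : Fin (n + 1) → R) (Fin.last n) = 0 := by
      intro z
      have hz : p (z : N) = 0 := z.2
      have h2 : f (z : N) = ((p (z : N) : R)) := rfl
      rw [hz] at h2
      simpa [hf] using h2
    have hginj : Injective g := by
      intro x y hxy
      refine Subtype.ext (Subtype.ext (funext fun i => ?_))
      refine Fin.lastCases ?_ ?_ i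
      · rw [hlast x, hlast y]
      · intro j
        have h3 := congrFun hxy j
        simpa [hg, LinearMap.funLeft_apply] using h3
    haveI : Module.Finite R (LinearMap.range g) := Module.Finite.range g
    haveI hKproj : Module.Projective R K := by
      haveI := ih (LinearMap.range g) (Module.Finite.iff_fg.mp inferInstance)
      exact Module.Projective.of_equiv (LinearEquiv.ofInjective g hginj).symm
    haveI := hJproj
    haveI : Module.Projective R (K × LinearMap.range f) := myProjective_prod
    refine Module.Projective.of_split (r.prod p) (K.subtype.coprod s) ?_
    refine LinearMap.ext fun x => ?_
    have h4 : p (s (p x)) = p x := LinearMap.congr_fun hs (p x)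
    simp [hr]

end ProdProj

section Maschke

variable {R : Type*} [Ring R] {G : Type*} [Group G]
variable {V W : Type*} [AddCommGroup V] [Module R V] [Module (MonoidAlgebra R G) V]
  [IsScalarTower R (MonoidAlgebra R G) V]
  [AddCommGroup W] [Module R W] [Module (MonoidAlgebra R G) W]
  [IsScalarTower R (MonoidAlgebra R G) W]

theorem mySmul_via_single (r : R) (v : V) :
    r • v = (single (1 : G) r : MonoidAlgebra R G) • v := by
  have h : (single (1 : G) r : MonoidAlgebra R G) = r • (1 : MonoidAlgebra R G) := by
    rw [MonoidAlgebra.one_def, MonoidAlgebra.smul_single, smul_eq_mul, mul_one]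
  rw [h, smul_assoc r (1 : MonoidAlgebra R G) v, one_smul]

theorem mySingle_smul_comm (g : G) (r : R) (v : V) :
    (single g (1 : R) : MonoidAlgebra R G) • (r • v)
      = r • ((single g (1 : R) : MonoidAlgebra R G) • v) := by
  rw [mySmul_via_single (G := G) r v,
    mySmul_via_single (G := G) r ((single g (1 : R) : MonoidAlgebra R G) • v),
    ← mul_smul, ← mul_smul, single_mul_single, single_mul_single]
  simp

/-- Build a `R[G]`-linear map from an `R`-linear `G`-equivariant map
(noncommutative version of `MonoidAlgebra.equivariantOfLinearOfComm`). -/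
def myEquivariant (f : V →ₗ[R] W)
    (h : ∀ (g : G) (v : V), f ((single g (1 : R) : MonoidAlgebra R G) • v)
      = (single g (1 : R) : MonoidAlgebra R G) • f v) :
    V →ₗ[MonoidAlgebra R G] W where
  toFun := f
  map_add' := f.map_add
  map_smul' a v := by
    dsimp only [RingHom.id_apply]
    induction a using MonoidAlgebra.induction with
    | zero => simp
    | single_add g r a' hg hr ih =>
      rw [add_smul, add_smul, f.map_add, ih]
      congr 1
      have hsingle : (MonoidAlgebra.single g r : MonoidAlgebra R G)
          = r • (single g (1 : R) : MonoidAlgebra R G) := by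
        rw [MonoidAlgebra.smul_single', mul_one]
      rw [hsingle, smul_assoc, f.map_smul, h, smul_assoc]

variable [Fintype G]

/-- Noncommutative Maschke: an `R`-linear section of a surjective `R[G]`-linear map
can be averaged into an `R[G]`-linear section. -/
theorem myMaschke_section {c : R} (hc : ∀ r : R, c * r = r * c)
    (hcard : (Fintype.card G : R) * c = 1)
    (q : W →ₗ[MonoidAlgebra R G] V) (s : V →ₗ[R] W) (hs : ∀ v : V, q (s v) = v) :
    ∃ σ : V →ₗ[MonoidAlgebra R G] W, ∀ v : V, q (σ v) = v := by
  -- conjugates of s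
  let conj : G → (V →ₗ[R] W) := fun g =>
    { toFun := fun v => (single g⁻¹ (1 : R) : MonoidAlgebra R G) •
        s ((single g (1 : R) : MonoidAlgebra R G) • v)
      map_add' := fun x y => by simp [smul_add]
      map_smul' := fun r v => by
        dsimp only [RingHom.id_apply]
        rw [mySingle_smul_comm, s.map_smul, mySingle_smul_comm] }
  let cSmul : W →ₗ[R] W :=
    { toFun := fun w => c • w
      map_add' := fun x y => smul_add c x y
      map_smul' := fun r w => by
        dsimp only [RingHom.id_apply]
        rw [smul_smul, smul_smul, hc] }
  let T : V →ₗ[R] W := cSmul.comp (∑ g : G, conj g)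
  have hTapp : ∀ v : V, T v = c • ∑ g : G, (single g⁻¹ (1 : R) : MonoidAlgebra R G) •
      s ((single g (1 : R) : MonoidAlgebra R G) • v) := by
    intro v
    simp only [T, cSmul, conj, LinearMap.comp_apply, LinearMap.coe_mk, AddHom.coe_mk,
      LinearMap.coe_sum, Finset.sum_apply]
  have hTequiv : ∀ (g₀ : G) (v : V),
      T ((single g₀ (1 : R) : MonoidAlgebra R G) • v)
        = (single g₀ (1 : R) : MonoidAlgebra R G) • T v := by
    intro g₀ v
    rw [hTapp, hTapp]
    have hsum : ∑ g : G, (single g⁻¹ (1 : R) : MonoidAlgebra R G) •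
        s ((single g (1 : R) : MonoidAlgebra R G) •
          ((single g₀ (1 : R) : MonoidAlgebra R G) • v))
        = (single g₀ (1 : R) : MonoidAlgebra R G) •
          ∑ g : G, (single g⁻¹ (1 : R) : MonoidAlgebra R G) •
            s ((single g (1 : R) : MonoidAlgebra R G) • v) := by
      rw [Finset.smul_sum]
      refine Fintype.sum_bijective (· * g₀) (Group.mulRight_bijective g₀) _ _ fun i => ?_
      simp only [← mul_smul, single_mul_single, one_mul, mul_one, mul_inv_rev,
        mul_inv_cancel_left]
    rw [hsum, mySingle_smul_comm]
  refine ⟨myEquivariant T hTequiv, fun v => ?_⟩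
  have : (myEquivariant T hTequiv) v = T v := rfl
  rw [this, hTapp]
  have hterm : ∀ g : G, q ((single g⁻¹ (1 : R) : MonoidAlgebra R G) •
      s ((single g (1 : R) : MonoidAlgebra R G) • v)) = v := by
    intro g
    rw [q.map_smul, hs, smul_smul, single_mul_single]
    simp only [inv_mul_cancel, one_mul]
    rw [← MonoidAlgebra.one_def, one_smul]
  rw [mySmul_via_single (G := G) c, q.map_smul, ← mySmul_via_single (G := G) c, map_sum]
  simp only [hterm]
  rw [Finset.sum_const, Finset.card_univ, ← Nat.cast_smul_eq_nsmul R, smul_smul,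
    hc ((Fintype.card G : R)), hcard, one_smul]

end Maschke

theorem semihereditary_monoidAlgebra
    {k : Type*} [Field k] (G : Type*) [Group G] [Fintype G]
    (hG : ¬ (ringChar k ∣ Fintype.card G))
    (R : Type*) [Ring R] [Algebra k R]
    (hR : ∀ I : Ideal R, I.FG → Module.Projective R I) :
    ∀ I : Ideal (MonoidAlgebra R G), I.FG →
      Module.Projective (MonoidAlgebra R G) I := by
  intro I hI
  haveI : Module.Finite (MonoidAlgebra R G) I := Module.Finite.iff_fg.mpr hI
  haveI : Module.Finite R (MonoidAlgebra R G) :=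
    Module.Finite.equiv ((MonoidAlgebra.coeffLinearEquiv R).trans (Finsupp.linearEquivFunOnFinite R R G)).symm
  obtain ⟨m, q, hq⟩ := Module.Finite.exists_fin' (MonoidAlgebra R G) I
  haveI : Module.Finite R I := Module.Finite.of_surjective (q.restrictScalars R) hq
  -- I is projective over R
  let e : MonoidAlgebra R G ≃ₗ[R] (Fin (Fintype.card G) → R) :=
    ((MonoidAlgebra.coeffLinearEquiv R).trans (Finsupp.linearEquivFunOnFinite R R G)).trans
      (LinearEquiv.funCongrLeft R R (Fintype.equivFin G).symm)
  let j : I →ₗ[R] (Fin (Fintype.card G) → R) :=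
    e.toLinearMap.comp ((Submodule.subtype I).restrictScalars R)
  have hjinj : Injective j := by
    intro x y hxy
    exact Subtype.ext (e.injective hxy)
  haveI : Module.Finite R (LinearMap.range j) := Module.Finite.range j
  haveI hIproj : Module.Projective R I := by
    haveI := myFree_submodule_projective hR _ (LinearMap.range j)
      (Module.Finite.iff_fg.mp inferInstance)
    exact Module.Projective.of_equiv (LinearEquiv.ofInjective j hjinj).symm
  -- R-linear section of q
  obtain ⟨s, hs⟩ := Module.projective_lifting_property (q.restrictScalars R) LinearMap.id hq
  -- the averaging constant
  have hcardk : (Fintype.card G : k) ≠ 0 := fun h =>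
    hG ((CharP.cast_eq_zero_iff k (ringChar k) _).mp h)
  have hc : ∀ r : R, (algebraMap k R (Fintype.card G : k)⁻¹) * r
      = r * (algebraMap k R (Fintype.card G : k)⁻¹) :=
    fun r => (Algebra.commutes _ r)
  have hcard : (Fintype.card G : R) * (algebraMap k R (Fintype.card G : k)⁻¹) = 1 := by
    rw [show ((Fintype.card G : ℕ) : R) = algebraMap k R ((Fintype.card G : ℕ) : k) from
      (map_natCast (algebraMap k R) _).symm]
    rw [← map_mul, mul_inv_cancel₀ hcardk, map_one]
  obtain ⟨σ, hσ⟩ := myMaschke_section hc hcard q s (fun v => LinearMap.congr_fun hs v)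
  exact Module.Projective.of_split σ q (LinearMap.ext hσ)
end

section
/- Let k be a field, G a finite group whose order is not divisible by the characteristic of k, and R a k-algebra. If R is von Neumann regular, then the group algebra R[G] is a semiprime ring (it has no nonzero nilpotent two-sided ideals; equivalently, its nilradical-type condition I² = 0 implies I = 0 for two-sided ideals I). -/
/-!
Statement 16: Let `k` be a field, `G` a finite group whose order is not divisible by
the characteristic of `k`, and `R` a `k`-algebra. If `R` is von Neumann regular, then
the group algebra `R[G] = MonoidAlgebra R G` is semiprime: every two-sided ideal `I`
with `I² = 0` (i.e. all products of two elements of `I` vanish) is zero.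
-/

/-- Ring computation used to combine two "right units". -/
private lemma unit_sup_calc {R : Type*} [Ring R] (e₁ e₂ f g x₁ x₂ : R)
    (hf : f = e₂ - e₂ * e₁) (hfg : f * g = f) (hge₁ : g * e₁ = 0)
    (h11 : e₁ * e₁ = e₁) (h1 : x₁ * e₁ = x₁) (h2 : x₂ * e₂ = x₂) :
    (x₁ + x₂) * (e₁ + g - e₁ * g) = x₁ + x₂ := by
  have hfe₁ : f * e₁ = 0 := by
    rw [hf, sub_mul, mul_assoc, h11, sub_self]
  have he₁h : e₁ * (e₁ + g - e₁ * g) = e₁ := by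
    rw [mul_sub, mul_add, ← mul_assoc, h11, add_sub_cancel_right]
  have hfh : f * (e₁ + g - e₁ * g) = f := by
    rw [mul_sub, mul_add, hfe₁, ← mul_assoc, hfe₁, zero_mul, sub_zero, zero_add, hfg]
  have hx₁h : x₁ * (e₁ + g - e₁ * g) = x₁ := by
    rw [mul_sub, mul_add, h1, ← mul_assoc, h1, add_sub_cancel_right]
  have hdecomp : x₂ = x₂ * f + x₂ * e₂ * e₁ := by
    rw [hf, mul_sub, ← mul_assoc, sub_add_cancel, h2]
  have hx₂h : x₂ * (e₁ + g - e₁ * g) = x₂ := by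
    calc x₂ * (e₁ + g - e₁ * g) = (x₂ * f + x₂ * e₂ * e₁) * (e₁ + g - e₁ * g) := by
          rw [← hdecomp]
      _ = x₂ * (f * (e₁ + g - e₁ * g)) + x₂ * e₂ * (e₁ * (e₁ + g - e₁ * g)) := by
          rw [add_mul, mul_assoc, mul_assoc]
      _ = x₂ * f + x₂ * e₂ * e₁ := by rw [hfh, he₁h]
      _ = x₂ := hdecomp.symm
  rw [add_mul, hx₁h, hx₂h]

/-- In a von Neumann regular ring, every finitely generated left ideal has a
right unit: an element `e ∈ J` with `x * e = x` for all `x ∈ J`. -/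
lemma vnr_fg_ideal_right_unit {R : Type*} [Ring R]
    (hR : ∀ a : R, ∃ x : R, a * x * a = a)
    (J : Submodule R R) (hJ : J.FG) :
    ∃ e ∈ J, ∀ x ∈ J, x * e = x := by
  refine Submodule.fg_induction (motive := fun J _ => ∃ e ∈ J, ∀ x ∈ J, x * e = x) ?_ ?_ J hJ
  · intro a
    obtain ⟨x, hx⟩ := hR a
    refine ⟨x * a, ?_, ?_⟩
    · exact Submodule.smul_mem _ x (Submodule.mem_span_singleton_self a)
    · intro z hz
      obtain ⟨r, rfl⟩ := Submodule.mem_span_singleton.mp hz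
      show (r * a) * (x * a) = r * a
      rw [mul_assoc r a (x * a), ← mul_assoc a x a, hx]
  · rintro J₁ J₂ _ _ ⟨e₁, he₁J, he₁⟩ ⟨e₂, he₂J, he₂⟩
    obtain ⟨y, hy⟩ := hR (e₂ - e₂ * e₁)
    have hfJ : e₂ - e₂ * e₁ ∈ J₁ ⊔ J₂ :=
      sub_mem (Submodule.mem_sup_right he₂J)
        (Submodule.mem_sup_left (Submodule.smul_mem _ e₂ he₁J))
    have hgJ : y * (e₂ - e₂ * e₁) ∈ J₁ ⊔ J₂ := Submodule.smul_mem _ y hfJ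
    have h11 : e₁ * e₁ = e₁ := he₁ e₁ he₁J
    have hfe₁ : (e₂ - e₂ * e₁) * e₁ = 0 := by
      rw [sub_mul, mul_assoc, h11, sub_self]
    refine ⟨e₁ + y * (e₂ - e₂ * e₁) - e₁ * (y * (e₂ - e₂ * e₁)), ?_, ?_⟩
    · exact sub_mem (add_mem (Submodule.mem_sup_left he₁J) hgJ)
        (Submodule.smul_mem _ e₁ hgJ)
    · intro x hx
      obtain ⟨x₁, hx₁, x₂, hx₂, rfl⟩ := Submodule.mem_sup.mp hx
      refine unit_sup_calc e₁ e₂ (e₂ - e₂ * e₁) (y * (e₂ - e₂ * e₁)) x₁ x₂ rfl ?_ ?_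
        h11 (he₁ x₁ hx₁) (he₂ x₂ hx₂)
      · rw [← mul_assoc]; exact hy
      · rw [mul_assoc, hfe₁, mul_zero]

/-- Over a von Neumann regular ring, a finitely generated submodule of the free
module `G →₀ R` supported in a finite set `s` is the image of an `R`-linear
projection. -/
lemma vnr_fg_proj {R : Type*} [Ring R] (hR : ∀ a : R, ∃ x : R, a * x * a = a)
    {G : Type*} [DecidableEq G] (s : Finset G) :
    ∀ L : Submodule R (G →₀ R), L.FG → (∀ x ∈ L, ∀ g, g ∉ s → x g = 0) →
      ∃ π : (G →₀ R) →ₗ[R] (G →₀ R), (∀ x, π x ∈ L) ∧ ∀ x ∈ L, π x = x := by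
  induction s using Finset.induction_on with
  | empty =>
    intro L _ hsupp
    refine ⟨0, fun x => by simpa using L.zero_mem, fun x hx => ?_⟩
    have : x = 0 := Finsupp.ext fun g => hsupp x hx g (Finset.notMem_empty g)
    simp [this]
  | @insert a s ha IH =>
    intro L hFG hsupp
    set ev : (G →₀ R) →ₗ[R] R := Finsupp.lapply a with hev_def
    set J : Submodule R R := L.map ev with hJ_def
    obtain ⟨e, heJ, he⟩ := vnr_fg_ideal_right_unit hR J (hFG.map ev)
    obtain ⟨u, huL, hua⟩ := Submodule.mem_map.mp heJ
    have hua' : u a = e := hua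
    set σ : (G →₀ R) →ₗ[R] (G →₀ R) := (LinearMap.toSpanSingleton R _ u).comp ev with hσ_def
    set ψ : (G →₀ R) →ₗ[R] (G →₀ R) := LinearMap.id - σ with hψ_def
    have hψ_apply : ∀ x, ψ x = x - (x a) • u := fun x => rfl
    set L' : Submodule R (G →₀ R) := L.map ψ with hL'_def
    have hL'le : L' ≤ L := by
      rintro _ ⟨x, hx, rfl⟩
      rw [hψ_apply]
      exact sub_mem hx (L.smul_mem _ huL)
    have hmemJ : ∀ x ∈ L, x a ∈ J := fun x hx => ⟨x, hx, rfl⟩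
    have hL'supp : ∀ y ∈ L', ∀ g, g ∉ s → y g = 0 := by
      rintro _ ⟨x, hx, rfl⟩ g hg
      rw [hψ_apply]
      by_cases hga : g = a
      · subst hga
        have h1 : (x g • u) g = x g * u g := by
          rw [Finsupp.smul_apply, smul_eq_mul]
        rw [Finsupp.sub_apply, h1, hua', he _ (hmemJ x hx), sub_self]
      · have hgx : x g = 0 := hsupp x hx g (by simp [hga, hg])
        have hgu : u g = 0 := hsupp u huL g (by simp [hga, hg])
        rw [Finsupp.sub_apply, Finsupp.smul_apply, hgx, hgu, smul_zero, sub_zero]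
    obtain ⟨π', hπ'mem, hπ'id⟩ := IH L' (hFG.map ψ) hL'supp
    set τ : (G →₀ R) →ₗ[R] (G →₀ R) :=
      (LinearMap.toSpanSingleton R _ u).comp ((LinearMap.toSpanSingleton R R e).comp ev)
      with hτ_def
    have hτ_apply : ∀ x, τ x = (x a * e) • u := by
      intro x
      show (((x a) • e)) • u = (x a * e) • u
      rw [smul_eq_mul]
    refine ⟨π'.comp ψ + τ, ?_, ?_⟩
    · intro x
      have h1 : π' (ψ x) ∈ L := hL'le (hπ'mem (ψ x))
      have h2 : τ x ∈ L := by rw [hτ_apply]; exact L.smul_mem _ huL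
      exact L.add_mem h1 h2
    · intro x hx
      have hψxL' : ψ x ∈ L' := Submodule.mem_map_of_mem hx
      have h1 : π' (ψ x) = ψ x := hπ'id _ hψxL'
      have h2 : x a * e = x a := he _ (hmemJ x hx)
      show π' (ψ x) + τ x = x
      rw [h1, hτ_apply, h2, hψ_apply, sub_add_cancel]

/-- The projection lemma, specialized to a monoid algebra over a finite group. -/
lemma vnr_fg_proj' {R : Type*} [Ring R] (hR : ∀ a : R, ∃ x : R, a * x * a = a)
    {G : Type*} [Monoid G] [Fintype G] (L : Submodule R (MonoidAlgebra R G)) (hFG : L.FG) :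
    ∃ π : MonoidAlgebra R G →ₗ[R] MonoidAlgebra R G, (∀ x, π x ∈ L) ∧ ∀ x ∈ L, π x = x := by
  classical
  set E : MonoidAlgebra R G ≃ₗ[R] (G →₀ R) := MonoidAlgebra.coeffLinearEquiv R
  obtain ⟨π, hπ1, hπ2⟩ := vnr_fg_proj hR (Finset.univ : Finset G) (L.map (E : _ →ₗ[R] _))
    (hFG.map _) (fun x _ g hg => absurd (Finset.mem_univ g) hg)
  refine ⟨(E.symm : _ →ₗ[R] _) ∘ₗ π ∘ₗ (E : _ →ₗ[R] _), fun x => ?_, fun x hx => ?_⟩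
  · obtain ⟨y, hy, hyx⟩ := Submodule.mem_map.mp (hπ1 (E x))
    simp only [LinearMap.coe_comp, Function.comp_apply, LinearEquiv.coe_coe] at hyx ⊢
    rw [← hyx, LinearEquiv.symm_apply_apply]
    exact hy
  · simp only [LinearMap.coe_comp, Function.comp_apply, LinearEquiv.coe_coe]
    rw [hπ2 (E x) ⟨x, hx, rfl⟩, LinearEquiv.symm_apply_apply]

theorem semiprime_monoidAlgebra_of_vonNeumannRegular
    {k : Type*} [Field k] (G : Type*) [Group G] [Fintype G]
    (hG : ¬ (ringChar k ∣ Fintype.card G))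
    (R : Type*) [Ring R] [Algebra k R]
    (hR : ∀ a : R, ∃ x : R, a * x * a = a) :
    ∀ I : TwoSidedIdeal (MonoidAlgebra R G),
      (∀ x ∈ I, ∀ y ∈ I, x * y = 0) → I = ⊥ := by
  classical
  intro I hI
  have key : ∀ α, α ∈ I → α = 0 := by
    intro α hα
    -- basic facts about the order of G
    set n : ℕ := Fintype.card G with hn_def
    have hk : ((n : ℕ) : k) ≠ 0 := by
      intro h
      exact hG ((CharP.cast_eq_zero_iff k (ringChar k) n).mp h)
    set c : R := algebraMap k R (((n : ℕ) : k)⁻¹) with hc_def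
    have hc_comm : ∀ r : R, c * r = r * c := fun r => Algebra.commutes _ r
    have hcn : c * (n : R) = 1 := by
      rw [hc_def, ← map_natCast (algebraMap k R) n, ← map_mul,
        inv_mul_cancel₀ hk, map_one]
    have hαSα : ∀ s : MonoidAlgebra R G, α * s * α = 0 := fun s =>
      hI _ (I.mul_mem_right _ _ hα) _ hα
    -- the left ideal generated by α, as an R-submodule
    set L : Submodule R (MonoidAlgebra R G) :=
      Submodule.span R (Set.range fun g : G => (MonoidAlgebra.single g (1 : R)) * α)
      with hL_def
    -- helper lemmas
    have hsmul_def : ∀ (r : R) (x : MonoidAlgebra R G),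
        r • x = MonoidAlgebra.single (1 : G) r * x := by
      intro r x
      refine MonoidAlgebra.coeff_injective <| Finsupp.ext fun g => ?_
      rw [MonoidAlgebra.coeff_single_one_mul]
      rfl
    have hsingle_smul : ∀ (h : G) (r : R) (x : MonoidAlgebra R G),
        MonoidAlgebra.single h (1 : R) * (r • x) = r • (MonoidAlgebra.single h 1 * x) := by
      intro h r x
      rw [hsmul_def, hsmul_def, ← mul_assoc, ← mul_assoc,
        MonoidAlgebra.single_mul_single, MonoidAlgebra.single_mul_single,
        mul_one, one_mul, one_mul, mul_one]
    have hLmul : ∀ (h : G) (x : MonoidAlgebra R G), x ∈ L →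
        MonoidAlgebra.single h (1 : R) * x ∈ L := by
      intro h x hx
      induction hx using Submodule.span_induction with
      | mem x hxs =>
        obtain ⟨g, rfl⟩ := hxs
        rw [← mul_assoc, MonoidAlgebra.single_mul_single, mul_one]
        exact Submodule.subset_span ⟨h * g, rfl⟩
      | zero => rw [mul_zero]; exact L.zero_mem
      | add x y hx hy ihx ihy => rw [mul_add]; exact L.add_mem ihx ihy
      | smul r x hx ih => rw [hsingle_smul]; exact L.smul_mem r ih
    have hLrep : ∀ x ∈ L, ∃ s : MonoidAlgebra R G, x = s * α := by
      intro x hx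
      induction hx using Submodule.span_induction with
      | mem x hxs =>
        obtain ⟨g, rfl⟩ := hxs
        exact ⟨MonoidAlgebra.single g 1, rfl⟩
      | zero => exact ⟨0, (zero_mul α).symm⟩
      | add x y hx hy ihx ihy =>
        obtain ⟨s₁, rfl⟩ := ihx
        obtain ⟨s₂, rfl⟩ := ihy
        exact ⟨s₁ + s₂, (add_mul s₁ s₂ α).symm⟩
      | smul r x hx ih =>
        obtain ⟨s, rfl⟩ := ih
        exact ⟨r • s, by rw [hsmul_def, hsmul_def, mul_assoc]⟩
    have hαL : α ∈ L := by
      have h1 : (MonoidAlgebra.single (1 : G) (1 : R)) * α = α := by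
        rw [← MonoidAlgebra.one_def, one_mul]
      exact h1 ▸ Submodule.subset_span ⟨1, rfl⟩
    -- the projection from von Neumann regularity
    obtain ⟨π, hπmem, hπid⟩ :=
      vnr_fg_proj' hR L (Submodule.fg_span (Set.finite_range _))
    -- the averaged element
    set T : MonoidAlgebra R G :=
      ∑ g : G, MonoidAlgebra.single g (1 : R) * π (MonoidAlgebra.single g⁻¹ 1)
      with hT_def
    set e₀ : MonoidAlgebra R G := c • T with he₀_def
    have he₀L : e₀ ∈ L :=
      L.smul_mem c (Submodule.sum_mem L fun g _ => hLmul g _ (hπmem _))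
    -- decomposition of α into its coefficients
    have hαdecomp : α = ∑ h ∈ α.coeff.support, MonoidAlgebra.single h (α.coeff h) := by
      exact (MonoidAlgebra.sum_coeff_single α).symm
    -- Claim A : α = c • ∑ g, g * π (g⁻¹ * α)
    have claimA : α = c • ∑ g : G,
        MonoidAlgebra.single g (1 : R) * π (MonoidAlgebra.single g⁻¹ 1 * α) := by
      have h1 : ∀ g : G, π (MonoidAlgebra.single g⁻¹ (1 : R) * α)
          = MonoidAlgebra.single g⁻¹ 1 * α := fun g => hπid _ (hLmul g⁻¹ α hαL)
      have h2 : ∀ g : G, MonoidAlgebra.single g (1 : R) *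
          (MonoidAlgebra.single g⁻¹ (1 : R) * α) = α := by
        intro g
        rw [← mul_assoc, MonoidAlgebra.single_mul_single, mul_inv_cancel, mul_one,
          ← MonoidAlgebra.one_def, one_mul]
      rw [Finset.sum_congr rfl (fun g _ => by rw [h1 g, h2 g]),
        Finset.sum_const, Finset.card_univ, ← hn_def,
        ← Nat.cast_smul_eq_nsmul R, smul_smul, hcn, one_smul]
    -- Claim B : the sum above equals α * e₀
    have claimB : (c • ∑ g : G,
        MonoidAlgebra.single g (1 : R) * π (MonoidAlgebra.single g⁻¹ 1 * α)) = α * e₀ := by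
      -- step 1: expand the argument of π
      have step2 : ∀ g : G, π (MonoidAlgebra.single g⁻¹ (1 : R) * α)
          = ∑ h ∈ α.coeff.support, α.coeff h • π (MonoidAlgebra.single (g⁻¹ * h) 1) := by
        intro g
        have h1 : MonoidAlgebra.single g⁻¹ (1 : R) * α
            = ∑ h ∈ α.coeff.support, MonoidAlgebra.single (g⁻¹ * h) (α.coeff h) := by
          conv_lhs => rw [hαdecomp]
          rw [Finset.mul_sum]
          exact Finset.sum_congr rfl fun h _ => by
            rw [MonoidAlgebra.single_mul_single, one_mul]
        rw [h1, map_sum]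
        refine Finset.sum_congr rfl fun h _ => ?_
        have h2 : MonoidAlgebra.single (g⁻¹ * h) (α.coeff h)
            = α.coeff h • MonoidAlgebra.single (g⁻¹ * h) (1 : R) := by
          rw [MonoidAlgebra.smul_single', mul_one]
        rw [h2, map_smul]
      -- step 2: rewrite each summand and swap the two sums
      have step3 : ∑ g : G,
          MonoidAlgebra.single g (1 : R) * π (MonoidAlgebra.single g⁻¹ 1 * α)
          = ∑ h ∈ α.coeff.support, α.coeff h •
              ∑ g : G, MonoidAlgebra.single g (1 : R) * π (MonoidAlgebra.single (g⁻¹ * h) 1) := by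
        rw [Finset.sum_congr rfl (fun g _ => by
          rw [step2 g, Finset.mul_sum,
            Finset.sum_congr rfl (fun h _ => hsingle_smul g (α.coeff h) _)])]
        rw [Finset.sum_comm]
        exact Finset.sum_congr rfl fun h _ => (Finset.smul_sum).symm
      -- step 3: reindex the inner sum
      have step5 : ∀ h : G,
          ∑ g : G, MonoidAlgebra.single g (1 : R) * π (MonoidAlgebra.single (g⁻¹ * h) 1)
          = MonoidAlgebra.single h (1 : R) * T := by
        intro h
        rw [hT_def, Finset.mul_sum]
        refine (Fintype.sum_equiv (Equiv.mulLeft h)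
          (fun g : G => MonoidAlgebra.single h (1 : R) *
            (MonoidAlgebra.single g (1 : R) * π (MonoidAlgebra.single g⁻¹ 1)))
          (fun g : G => MonoidAlgebra.single g (1 : R) *
            π (MonoidAlgebra.single (g⁻¹ * h) 1)) fun g => ?_).symm
        simp only [Equiv.coe_mulLeft]
        have h1 : (h * g)⁻¹ * h = g⁻¹ := by
          rw [mul_inv_rev, inv_mul_cancel_right]
        have h2 : MonoidAlgebra.single (h * g) (1 : R)
            = MonoidAlgebra.single h (1 : R) * MonoidAlgebra.single g 1 := by
          rw [MonoidAlgebra.single_mul_single, one_mul]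
        rw [h1, h2, mul_assoc]
      -- step 4: recombine
      have step6 : ∑ h ∈ α.coeff.support, α.coeff h • (MonoidAlgebra.single h (1 : R) * T)
          = α * T := by
        rw [Finset.sum_congr rfl (fun h _ => by
          rw [← smul_mul_assoc, MonoidAlgebra.smul_single', mul_one]),
          ← Finset.sum_mul, ← hαdecomp]
      -- step 5: move the central scalar `c` across α
      have hcα : MonoidAlgebra.single (1 : G) c * α = α * MonoidAlgebra.single (1 : G) c :=
        MonoidAlgebra.coeff_injective <| Finsupp.ext fun g => by
          rw [MonoidAlgebra.coeff_single_one_mul, MonoidAlgebra.coeff_mul_single_one, hc_comm]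
      calc (c • ∑ g : G,
          MonoidAlgebra.single g (1 : R) * π (MonoidAlgebra.single g⁻¹ 1 * α))
          = c • (α * T) := by
            rw [step3, Finset.sum_congr rfl (fun h _ => by rw [step5 h]), step6]
        _ = α * (c • T) := by
            rw [hsmul_def, hsmul_def, ← mul_assoc, hcα, mul_assoc]
        _ = α * e₀ := by rw [he₀_def]
    -- conclude
    have hαe : α = α * e₀ := claimA.trans claimB
    obtain ⟨s, hs⟩ := hLrep e₀ he₀L
    have hfinal : α = α * s * α := by
      calc α = α * e₀ := hαe
        _ = α * (s * α) := by rw [hs]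
        _ = α * s * α := (mul_assoc α s α).symm
    rw [hfinal, hαSα s]
  refine eq_bot_iff.mpr fun x hx => ?_
  exact key x hx
end
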